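/- Let 0 < p < 1, 0 < q < 1 with p + q < 1 and set λ := √3·(p + q − p² − q² − pq). Then (3√3·p²·q·(1−p−q)/(4λ)) · ∫₀^∞ ∫_{z₁}^∞ exp( −(√3/2)·( p(z₁ − z₂) + z₂ ) ) dz₂ dz₁ = p²q(1−p−q) / ((1−p)(p+q−p²−q²−pq)). -/

import Mathlib

open MeasureTheory Set Real

lemma exp_integral_Ioi (a b : ℝ) (hb : 0 < b) :
    ∫ x in Ioi a, Real.exp (-(b * x)) = Real.exp (-(b * a)) / b := by
  have := integral_comp_mul_left_Ioi (fun y => Real.exp (-y)) a hb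
  simp only [smul_eq_mul] at this
  rw [this, integral_exp_neg_Ioi]
  ring

theorem stmt_15 (p q : ℝ) (hp0 : 0 < p) (hp1 : p < 1) (hq0 : 0 < q) (hq1 : q < 1)
    (hpq : p + q < 1) (lam : ℝ) (hlam : lam = Real.sqrt 3 * (p + q - p^2 - q^2 - p*q)) :
    (3 * Real.sqrt 3 * p^2 * q * (1 - p - q) / (4 * lam)) *
      (∫ z₁ in Ioi (0:ℝ), ∫ z₂ in Ioi z₁,
        Real.exp (-(Real.sqrt 3 / 2) * (p * (z₁ - z₂) + z₂)))
      = p^2 * q * (1 - p - q) / ((1 - p) * (p + q - p^2 - q^2 - p*q)) := by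
  have hS : 0 < p + q - p^2 - q^2 - p*q := by nlinarith
  have h3 : (0:ℝ) < Real.sqrt 3 := Real.sqrt_pos.mpr (by norm_num)
  have hsq : Real.sqrt 3 * Real.sqrt 3 = 3 := Real.mul_self_sqrt (by norm_num)
  set c : ℝ := Real.sqrt 3 / 2 with hc
  have hcpos : 0 < c := by positivity
  have hp1' : 0 < 1 - p := by linarith
  have hb : 0 < c * (1 - p) := by positivity
  have hinner : ∀ z₁ : ℝ, (∫ z₂ in Ioi z₁,
      Real.exp (-(Real.sqrt 3 / 2) * (p * (z₁ - z₂) + z₂)))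
      = Real.exp (-(c * z₁)) / (c * (1 - p)) := by
    intro z₁
    have key : ∀ z₂ : ℝ, Real.exp (-(Real.sqrt 3 / 2) * (p * (z₁ - z₂) + z₂))
        = Real.exp (-(c * p * z₁)) * Real.exp (-((c * (1 - p)) * z₂)) := by
      intro z₂
      rw [← Real.exp_add]
      congr 1
      rw [hc]; ring
    simp_rw [key, integral_const_mul, exp_integral_Ioi _ _ hb,
      mul_div_assoc', ← Real.exp_add]
    congr 2
    ring
  rw [← hc] at hinner
  simp_rw [hinner, integral_div, exp_integral_Ioi 0 c hcpos, mul_zero, neg_zero,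
    Real.exp_zero]
  have hcc : c * c = 3 / 4 := by
    rw [hc, div_mul_div_comm, hsq]; norm_num
  have h2 : 1 / c / (c * (1 - p)) = 4 / (3 * (1 - p)) := by
    field_simp
    linear_combination (-1) * hsq
  rw [h2, hlam]
  field_simp
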